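/- For all natural numbers n ≥ 1 and real p with 1/2 ≤ p ≤ 1: (1/2^n) · Σ_{i=0}^{n} C(n,i) · (max(i, n−i)·p + min(i, n−i)·(1−p)) / n = 1/2 + (1/2^n)·(2p−1)·C(n−1, ⌊(n−1)/2⌋). -/

import Mathlib

open Finset

lemma key_step (n : ℕ) (hn : 1 ≤ n) (i : ℕ) :
    (n.choose i : ℤ) * ((n : ℤ) - 2 * i) =
      (n : ℤ) * (n - 1).choose i -
        (if i = 0 then 0 else (n : ℤ) * (n - 1).choose (i - 1)) := by
  obtain ⟨m, rfl⟩ : ∃ m, n = m + 1 := ⟨n - 1, by omega⟩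
  rcases i with _ | j
  · simp
  · simp only [Nat.succ_sub_one, if_neg (Nat.succ_ne_zero j)]
    rcases le_or_gt j m with hj | hj
    · have h := Nat.choose_succ_right_eq m j
      have hcast : (m.choose (j+1) : ℤ) * (j+1) = m.choose j * ((m:ℤ) - j) := by
        have := congrArg (Nat.cast : ℕ → ℤ) h
        push_cast [Nat.cast_sub hj] at this
        linarith [this]
      rw [Nat.choose_succ_succ]
      push_cast
      linear_combination -2 * hcast
    · have h1 : m.choose (j+1) = 0 := Nat.choose_eq_zero_of_lt (by omega)
      have h2 : (m+1).choose (j+1) = 0 := Nat.choose_eq_zero_of_lt (by omega)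
      rcases Nat.lt_or_ge j m with h | h
      · omega
      · have h3 : m.choose j = 0 ∨ j = m := by
          rcases Nat.lt_or_ge m j with hh | hh
          · exact Or.inl (Nat.choose_eq_zero_of_lt hh)
          · exact Or.inr (by omega)
        rcases h3 with h3 | h3
        · simp [h1, h2, h3]
        · omega

lemma key_int (n : ℕ) (hn : 1 ≤ n) :
    ∑ i ∈ range (n + 1), (n.choose i : ℤ) * |(n : ℤ) - 2 * i| =
      2 * n * (n - 1).choose ((n - 1) / 2) := by
  set f : ℕ → ℤ := fun i => if i = 0 then 0 else (n : ℤ) * (n - 1).choose (i - 1) with hf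
  have hstep : ∀ i, (n.choose i : ℤ) * ((n : ℤ) - 2 * i) = f (i + 1) - f i := by
    intro i
    rw [key_step n hn i]
    simp only [hf]
    rcases i with _ | j
    · simp
    · simp
  set k := n / 2 with hk
  have hk1 : k + 1 ≤ n + 1 := by omega
  have hsplit := Finset.sum_range_add_sum_Ico
    (fun i => (n.choose i : ℤ) * |(n : ℤ) - 2 * i|) hk1
  have h1 : ∑ i ∈ range (k + 1), (n.choose i : ℤ) * |(n : ℤ) - 2 * i|
      = (n : ℤ) * (n - 1).choose k := by
    have : ∀ i ∈ range (k + 1), (n.choose i : ℤ) * |(n : ℤ) - 2 * i|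
        = f (i + 1) - f i := by
      intro i hi
      simp only [mem_range] at hi
      rw [abs_of_nonneg (by push_cast; omega : (0:ℤ) ≤ (n : ℤ) - 2 * i)]
      exact hstep i
    rw [Finset.sum_congr rfl this, Finset.sum_range_sub f]
    simp [hf]
  have h2 : ∑ i ∈ Finset.Ico (k + 1) (n + 1), (n.choose i : ℤ) * |(n : ℤ) - 2 * i|
      = (n : ℤ) * (n - 1).choose k := by
    have heq : ∀ i ∈ Finset.Ico (k + 1) (n + 1), (n.choose i : ℤ) * |(n : ℤ) - 2 * i|
        = f i - f (i + 1) := by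
      intro i hi
      simp only [Finset.mem_Ico] at hi
      rw [abs_of_nonpos (by push_cast; omega : (n : ℤ) - 2 * i ≤ 0)]
      have := hstep i
      linarith [this]
    rw [Finset.sum_congr rfl heq, Finset.sum_Ico_eq_sub _ hk1,
      Finset.sum_range_sub' f, Finset.sum_range_sub' f]
    have hfn : f (n + 1) = 0 := by
      simp only [hf]
      rw [if_neg (Nat.succ_ne_zero n), Nat.add_sub_cancel,
        Nat.choose_eq_zero_of_lt (by omega : n - 1 < n)]
      simp
    rw [hfn]
    simp [hf]
  have hsym : (n - 1).choose k = (n - 1).choose ((n - 1) / 2) := by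
    have h : (n - 1) / 2 = (n - 1) - k := by omega
    rw [h, Nat.choose_symm (by omega : k ≤ n - 1)]
  rw [← hsplit, h1, h2, hsym]
  ring

theorem stmt1 (n : ℕ) (hn : 1 ≤ n) (p : ℝ) (hp : 1 / 2 ≤ p) (hp1 : p ≤ 1) :
    (1 / 2 ^ n) * ∑ i ∈ Finset.range (n + 1),
        (n.choose i : ℝ) *
          ((max i (n - i) : ℕ) * p + (min i (n - i) : ℕ) * (1 - p)) / n
      = 1 / 2 + (1 / 2 ^ n) * (2 * p - 1) * ((n - 1).choose ((n - 1) / 2)) := by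
  have hn0 : (n : ℝ) ≠ 0 := Nat.cast_ne_zero.mpr (by omega)
  have hterm : ∀ i ∈ Finset.range (n + 1),
      (n.choose i : ℝ) * ((max i (n - i) : ℕ) * p + (min i (n - i) : ℕ) * (1 - p)) / n
      = (n.choose i : ℝ) / 2
        + ((2 * p - 1) / (2 * n)) * ((n.choose i : ℝ) * |(n : ℝ) - 2 * i|) := by
    intro i hi
    simp only [Finset.mem_range] at hi
    have hi' : i ≤ n := by omega
    have hcast : ((n - i : ℕ) : ℝ) = (n : ℝ) - i := by
      push_cast [hi']; ring
    rw [Nat.cast_max, Nat.cast_min, hcast]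
    rcases le_total ((i : ℕ) : ℝ) ((n : ℝ) - i) with h | h
    · rw [max_eq_right h, min_eq_left h,
        abs_of_nonneg (by linarith : (0:ℝ) ≤ (n : ℝ) - 2 * i)]
      field_simp
      ring
    · rw [max_eq_left h, min_eq_right h,
        abs_of_nonpos (by linarith : (n : ℝ) - 2 * i ≤ 0)]
      field_simp
      ring
  rw [Finset.sum_congr rfl hterm, Finset.sum_add_distrib, ← Finset.sum_div,
    ← Finset.mul_sum]
  have hS1 : ∑ i ∈ Finset.range (n + 1), (n.choose i : ℝ) = 2 ^ n := by
    exact_mod_cast congrArg (Nat.cast : ℕ → ℝ) (Nat.sum_range_choose n)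
  have hS2 : ∑ i ∈ Finset.range (n + 1), (n.choose i : ℝ) * |(n : ℝ) - 2 * i|
      = 2 * n * ((n - 1).choose ((n - 1) / 2)) := by
    have := congrArg (Int.cast : ℤ → ℝ) (key_int n hn)
    push_cast at this
    convert this using 2
  rw [hS1, hS2]
  have h2n : (2 : ℝ) ^ n ≠ 0 := by positivity
  field_simp
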